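/- Let Σ be a root system in a Euclidean space 𝔞* with an involutive automorphism σ, let Σ⁺ be a positive system, and suppose {α ∈ Σ⁺ : σα ∈ Σ⁺} is properly contained in Σ⁺ \ 𝔞_q*, where 𝔞_q* is the −1 eigenspace of σ on 𝔞*. Then there exists a simple root α of Σ⁺ with −σα ∈ Σ⁺ and α ∉ 𝔞_q* (i.e., σα ≠ −α). -/
import Mathlib


open RealInnerProductSpace

/-- Let `Rt` be a root system in a Euclidean space with an involutive
(self-adjoint) automorphism `σ`, `P` a positive system, and suppose
`{α ∈ P : σα ∈ P}` is properly contained in `P \ 𝔞_q*`, where `𝔞_q* = {ξ : σξ = -ξ}`.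
Then there is a `P`-simple root `α` (not a sum of two positive roots) with `-σα ∈ P` and
`σα ≠ -α`. -/
theorem stmt_8 {E : Type*} [NormedAddCommGroup E] [InnerProductSpace ℝ E]
    [FiniteDimensional ℝ E]
    (Rt : Set E) (hfin : Rt.Finite) (h0 : (0 : E) ∉ Rt) (hneg : ∀ α ∈ Rt, -α ∈ Rt)
    (σ : E →ₗ[ℝ] E) (hinv : ∀ v, σ (σ v) = v)
    (hsa : ∀ u v : E, ⟪σ u, v⟫ = ⟪u, σ v⟫)
    (hσRt : ∀ α ∈ Rt, σ α ∈ Rt)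
    (P : Set E) (hPRt : P ⊆ Rt)
    (hpos : ∀ α ∈ Rt, Xor' (α ∈ P) (-α ∈ P))
    (hreg : ∃ X : E, ∀ α ∈ P, 0 < ⟪α, X⟫)
    (hgen : ∀ α ∈ P, α ∈ AddSubmonoid.closure {β | β ∈ P ∧ ¬ ∃ γ ∈ P, ∃ δ ∈ P, β = γ + δ})
    (hproper : {α ∈ P | σ α ∈ P} ⊂ P \ {ξ | σ ξ = -ξ}) :
    ∃ α ∈ P, (¬ ∃ γ ∈ P, ∃ δ ∈ P, α = γ + δ) ∧ -σ α ∈ P ∧ σ α ≠ -α := by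
  classical
  obtain ⟨X, hX⟩ := hreg
  by_contra hcon
  push_neg at hcon
  -- f α := ⟪α,X⟫ + ⟪σα,X⟫
  set f : E → ℝ := fun α => ⟪α, X⟫ + ⟪σ α, X⟫ with hf
  -- every simple root γ satisfies 0 ≤ f γ, and f γ = 0 → σ γ = -γ
  have key : ∀ α ∈ AddSubmonoid.closure {β | β ∈ P ∧ ¬ ∃ γ ∈ P, ∃ δ ∈ P, β = γ + δ},
      0 ≤ f α ∧ (f α = 0 → σ α = -α) := by
    intro α hα
    refine AddSubmonoid.closure_induction (fun γ hγ => ?_) ?_ (fun x y hx hy ihx ihy => ?_) hα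
    · obtain ⟨hγP, hγsimp⟩ := hγ
      by_cases hσγ : σ γ ∈ P
      · have h1 : 0 < f γ := add_pos (hX γ hγP) (hX _ hσγ)
        exact ⟨le_of_lt h1, fun h => absurd h (ne_of_gt h1)⟩
      · have hx : Xor' (σ γ ∈ P) (-σ γ ∈ P) := hpos _ (hσRt γ (hPRt hγP))
        have hneg' : -σ γ ∈ P := by
          rcases hx with ⟨h1, _⟩ | ⟨h1, _⟩
          · exact absurd h1 hσγ
          · exact h1
        have heq : σ γ = -γ := hcon γ hγP (by push_neg at hγsimp; exact hγsimp) hneg'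
        constructor
        · simp [hf, heq, inner_neg_left]
        · intro _; exact heq
    · constructor
      · simp [hf]
      · intro _; simp
    · obtain ⟨hx0, hx1⟩ := ihx
      obtain ⟨hy0, hy1⟩ := ihy
      have hadd : f (x + y) = f x + f y := by
        simp [hf, inner_add_left, map_add]
        ring
      constructor
      · rw [hadd]; positivity
      · intro h
        rw [hadd] at h
        have hfx : f x = 0 := le_antisymm (by linarith) hx0
        have hfy : f y = 0 := le_antisymm (by linarith) hy0
        rw [map_add, hx1 hfx, hy1 hfy, neg_add]
  -- witness from properness
  obtain ⟨β, hβB, hβA⟩ := Set.not_subset.mp hproper.2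
  obtain ⟨hβP, hβq⟩ := hβB
  have hσβP : σ β ∉ P := fun h => hβA ⟨hβP, h⟩
  have hnσβ : -σ β ∈ P := by
    rcases hpos _ (hσRt β (hPRt hβP)) with ⟨h1, _⟩ | ⟨h1, _⟩
    · exact absurd h1 hσβP
    · exact h1
  have h1 := key β (hgen β hβP)
  have h2 := key _ (hgen _ hnσβ)
  have hfneg : f (-σ β) = -(f β) := by
    simp [hf, inner_neg_left, hinv β]
    try ring
  rw [hfneg] at h2
  have hfβ : f β = 0 := le_antisymm (by linarith [h2.1]) h1.1
  have := h1.2 hfβ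
  exact hβq this
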